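/- arXiv:1402.5165 — 10 statements merged into one kernel-verified Lean document; each statement's English description precedes it below -/
import Mathlib

section
/- Let S be a pure-strategies solution of finite games. If S satisfies Strategic Equivalence (SE) and Pure Individual Rationality (PIR), then for every game u, every element of S(u) is a pure Nash equilibrium of u, i.e. S(u) ⊆ PNE(u). -/
open scoped Classical

noncomputable section

/-- A finite normal-form game on action sets `A i`: a payoff function for each player. -/
abbrev Game {n : ℕ} (A : Fin n → Type*) : Type _ :=
  Fin n → (∀ j, A j) → ℝ

/-- Opponents' action profiles of player `i`. -/
abbrev Opp {n : ℕ} (A : Fin n → Type*) (i : Fin n) : Type _ :=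
  ∀ j : {j : Fin n // j ≠ i}, A j.1

/-- The game `z(c, i, b₋ᵢ)`: player `i` receives payoff `c` at every profile whose
opponents' component equals `b`, and `0` otherwise; all other players always get `0`. -/
def zGame {n : ℕ} {A : Fin n → Type*} (c : ℝ) (i : Fin n) (b : Opp A i) : Game A :=
  fun j a => if j = i ∧ (∀ k : {k : Fin n // k ≠ i}, a k.1 = b k) then c else 0

/-- The full action profile obtained from own action `ai` of player `i` and an
opponents' profile `b`. -/
def merge {n : ℕ} {A : Fin n → Type*} (i : Fin n) (ai : A i) (b : Opp A i) : ∀ j, A j :=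
  fun j => if h : j = i then cast (congrArg A h.symm) ai else b ⟨j, h⟩

/-- The pure individually rational value of player `i`:
`pir_i(u) = max_{a_i} min_{a_{-i}} u_i(a_i, a_{-i})`. -/
def pir {n : ℕ} {A : Fin n → Type*} (u : Game A) (i : Fin n) : ℝ :=
  ⨆ ai : A i, ⨅ b : Opp A i, u i (merge i ai b)

/-- `a` is a pure Nash equilibrium of `u`. -/
def IsPNE {n : ℕ} {A : Fin n → Type*} (u : Game A) (a : ∀ j, A j) : Prop :=
  ∀ (i : Fin n) (bi : A i), u i (Function.update a i bi) ≤ u i a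

/-- Opponents' component of a full profile. -/
def projOpp {n : ℕ} {A : Fin n → Type*} (i : Fin n) (a : ∀ j, A j) : Opp A i :=
  fun k => a k.1

lemma merge_projOpp {n : ℕ} {A : Fin n → Type*} (i : Fin n) (bi : A i) (a : ∀ j, A j) :
    merge i bi (projOpp i a) = Function.update a i bi := by
  funext j
  by_cases h : j = i
  · subst h; simp [merge]
  · simp [merge, h, Function.update, projOpp]

lemma projOpp_merge {n : ℕ} {A : Fin n → Type*} (i : Fin n) (bi : A i) (b : Opp A i) :
    projOpp i (merge i bi b) = b := by
  funext k
  simp [projOpp, merge, k.2]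

lemma zGame_apply_self {n : ℕ} {A : Fin n → Type*} (c : ℝ) (i : Fin n) (b : Opp A i)
    (a : ∀ j, A j) :
    zGame c i b i a = if projOpp i a = b then c else 0 := by
  have h : (i = i ∧ ∀ k : {k : Fin n // k ≠ i}, a k.1 = b k) ↔ projOpp i a = b := by
    simp only [eq_self_iff_true, true_and]
    exact funext_iff.symm
  show (if i = i ∧ (∀ k : {k : Fin n // k ≠ i}, a k.1 = b k) then c else 0) = _
  exact if_congr h rfl rfl

lemma sum_z_apply {n : ℕ} {A : Fin n → Type*} (c : ℝ) (i : Fin n) (F : Finset (Opp A i))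
    (a : ∀ j, A j) :
    (∑ b ∈ F, zGame c i b) i a = if projOpp i a ∈ F then c else 0 := by
  have h1 : (∑ b ∈ F, zGame c i b) i a = ∑ b ∈ F, zGame c i b i a := by
    rw [Finset.sum_apply, Finset.sum_apply]
  rw [h1]
  simp only [zGame_apply_self]
  rw [Finset.sum_ite_eq F (projOpp i a) fun _ => c]

lemma SE_sum {n : ℕ} {A : Fin n → Type*} (S : Game A → Set (∀ j, A j))
    (SE : ∀ (u : Game A) (c : ℝ) (i : Fin n) (b : Opp A i), S u = S (u + zGame c i b))
    (u : Game A) (c : ℝ) (i : Fin n) (F : Finset (Opp A i)) :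
    S u = S (u + ∑ b ∈ F, zGame c i b) := by
  induction F using Finset.induction_on with
  | empty => simp
  | @insert b F hb ih =>
    rw [ih, SE (u + ∑ b ∈ F, zGame c i b) c i b]
    congr 1
    rw [Finset.sum_insert hb, add_assoc,
      add_comm (∑ x ∈ F, zGame c i x) (zGame c i b)]

/-- Any pure-strategies solution satisfying Strategic Equivalence (SE) and
Pure Individual Rationality (PIR) only outputs pure Nash equilibria. -/
theorem statement0 {n : ℕ} (hn : 0 < n) (A : Fin n → Type*)
    [∀ i, Fintype (A i)] [∀ i, Nonempty (A i)]
    (S : Game A → Set (∀ j, A j))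
    (SE : ∀ (u : Game A) (c : ℝ) (i : Fin n) (b : Opp A i), S u = S (u + zGame c i b))
    (PIR : ∀ u : Game A, ∀ x ∈ S u, ∀ i : Fin n, u i x ≥ pir u i) :
    ∀ u : Game A, ∀ x ∈ S u, IsPNE u x := by
  intro u x hx i bi
  by_contra hlt
  push_neg at hlt
  set t := u i (Function.update x i bi) with ht
  have hne : (Finset.univ : Finset (Opp A i)).Nonempty := Finset.univ_nonempty
  set c := Finset.univ.sup' hne (fun b' : Opp A i => t - u i (merge i bi b')) with hc
  set F : Finset (Opp A i) := Finset.univ.erase (projOpp i x) with hF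
  set w : Game A := u + ∑ b ∈ F, zGame c i b with hw
  have hxw : x ∈ S w := by
    rw [← SE_sum S SE u c i F]; exact hx
  have hpir := PIR w x hxw i
  have h1 : w i x = u i x := by
    have hz : (∑ b ∈ F, zGame c i b) i x = 0 := by
      rw [sum_z_apply]
      simp [hF]
    calc w i x = u i x + (∑ b ∈ F, zGame c i b) i x := rfl
    _ = u i x := by rw [hz, add_zero]
  have hble : ∀ b' : Opp A i, t ≤ w i (merge i bi b') := by
    intro b'
    by_cases hb' : b' = projOpp i x
    · subst hb'
      have h0 : (∑ b ∈ F, zGame c i b) i (merge i bi (projOpp i x)) = 0 := by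
        rw [sum_z_apply, projOpp_merge]
        simp [hF]
      have heq : w i (merge i bi (projOpp i x)) = u i (merge i bi (projOpp i x)) := by
        calc w i (merge i bi (projOpp i x))
            = u i (merge i bi (projOpp i x)) + (∑ b ∈ F, zGame c i b) i (merge i bi (projOpp i x)) := rfl
        _ = u i (merge i bi (projOpp i x)) := by rw [h0, add_zero]
      rw [heq, merge_projOpp]
    · have h0 : (∑ b ∈ F, zGame c i b) i (merge i bi b') = c := by
        rw [sum_z_apply, projOpp_merge]
        simp [hF, hb']
      have heq : w i (merge i bi b') = u i (merge i bi b') + c := by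
        calc w i (merge i bi b')
            = u i (merge i bi b') + (∑ b ∈ F, zGame c i b) i (merge i bi b') := rfl
        _ = u i (merge i bi b') + c := by rw [h0]
      have hcge : t - u i (merge i bi b') ≤ c :=
        Finset.le_sup' (fun b'' : Opp A i => t - u i (merge i bi b'')) (Finset.mem_univ b')
      rw [heq]; linarith
  have h2 : t ≤ pir w i := by
    have hinf : t ≤ ⨅ b' : Opp A i, w i (merge i bi b') := le_ciInf hble
    have hsup : (⨅ b' : Opp A i, w i (merge i bi b')) ≤ pir w i := by
      unfold pir
      exact le_ciSup (f := fun ai : A i => ⨅ b : Opp A i, w i (merge i ai b))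
        (Finite.bddAbove_range _) bi
    linarith
  rw [h1] at hpir
  linarith

end
end

section
/- Let S be a mixed-strategies solution of finite games. If S satisfies Strategic Equivalence (SE) and Pure Individual Rationality (PIR), then for every game u, every element of S(u) is a mixed Nash equilibrium of u, i.e. S(u) ⊆ NE(u). -/
open scoped Classical

noncomputable section

/-- A mixed-strategy profile: a probability distribution on `A i` for each player `i`. -/
abbrev MixedProfile {n : ℕ} (A : Fin n → Type*) [∀ i, Fintype (A i)] : Type _ :=
  {x : ∀ i, A i → ℝ // ∀ i, (∀ c, 0 ≤ x i c) ∧ ∑ c, x i c = 1}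

/-- Multilinear extension of payoffs: the expected payoff of player `i` when each
player `j` independently plays the mixed strategy `x j`. -/
def Eu {n : ℕ} {A : Fin n → Type*} [∀ i, Fintype (A i)]
    (u : Game A) (i : Fin n) (x : ∀ j, A j → ℝ) : ℝ :=
  ∑ a : ∀ j, A j, (∏ j, x j (a j)) * u i a

/-- The pure (Dirac) strategy on action `bi`. -/
def pureStrat {n : ℕ} {A : Fin n → Type*} {i : Fin n} (bi : A i) : A i → ℝ :=
  fun c => if c = bi then 1 else 0


section Helpers

variable {n : ℕ} {A : Fin n → Type*}

def restrictProf (i : Fin n) (a : ∀ j, A j) : Opp A i := fun k => a k.1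

lemma merge_self (i : Fin n) (ai : A i) (b : Opp A i) : merge i ai b i = ai := by
  simp [merge]

lemma merge_ne (i : Fin n) (ai : A i) (b : Opp A i) (k : {k : Fin n // k ≠ i}) :
    merge i ai b k.1 = b k := by
  simp [merge, k.2]

lemma restrict_merge (i : Fin n) (ai : A i) (b : Opp A i) :
    restrictProf i (merge i ai b) = b := by
  funext k; exact merge_ne i ai b k

lemma merge_restrict (i : Fin n) (a : ∀ j, A j) :
    merge i (a i) (restrictProf i a) = a := by
  funext j
  by_cases h : j = i
  · subst h; simp [merge]
  · simp [merge, h, restrictProf]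

variable [∀ i, Fintype (A i)]

def splitEquiv (i : Fin n) : (A i × Opp A i) ≃ (∀ j, A j) where
  toFun p := merge i p.1 p.2
  invFun a := (a i, restrictProf i a)
  left_inv p := by
    cases p with
    | mk ai b => exact Prod.ext (merge_self i ai b) (restrict_merge i ai b)
  right_inv a := merge_restrict i a

lemma sum_split (i : Fin n) (F : (∀ j, A j) → ℝ) :
    ∑ a : ∀ j, A j, F a = ∑ ai : A i, ∑ b : Opp A i, F (merge i ai b) := by
  rw [← Equiv.sum_comp (splitEquiv i) F, Fintype.sum_prod_type]
  rfl

set_option linter.unusedSectionVars false in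
lemma prod_split (i : Fin n) (f : ∀ j, A j → ℝ) (a : ∀ j, A j) :
    ∏ j, f j (a j) = f i (a i) * ∏ k : {k : Fin n // k ≠ i}, f k.1 (a k.1) := by
  rw [Fintype.prod_eq_mul_prod_compl i]
  congr 1
  rw [← Finset.prod_subtype ({i}ᶜ : Finset (Fin n)) (fun x => by simp) (fun j => f j (a j))]

end Helpers

/-- Any mixed-strategies solution satisfying Strategic Equivalence (SE) and
Pure Individual Rationality (PIR) only outputs (mixed) Nash equilibria. -/
theorem statement1 {n : ℕ} (hn : 0 < n) (A : Fin n → Type*)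
    [∀ i, Fintype (A i)] [∀ i, Nonempty (A i)]
    (S : Game A → Set (MixedProfile A))
    (SE : ∀ (u : Game A) (c : ℝ) (i : Fin n) (b : Opp A i), S u = S (u + zGame c i b))
    (PIR : ∀ u : Game A, ∀ x ∈ S u, ∀ i : Fin n, Eu u i x.1 ≥ pir u i) :
    ∀ u : Game A, ∀ x ∈ S u, ∀ (i : Fin n) (bi : A i),
      Eu u i x.1 ≥ Eu u i (Function.update x.1 i (pureStrat bi)) := by
  intro u x hx i bi
  set g : Opp A i → ℝ := fun b => u i (merge i bi b) with hg
  set v : Game A := ∑ b : Opp A i, zGame (-(g b)) i b with hv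
  have hSE : ∀ s : Finset (Opp A i), S u = S (u + ∑ b ∈ s, zGame (-(g b)) i b) := by
    intro s
    induction s using Finset.induction with
    | empty => simp
    | @insert b s hbs ih =>
      rw [Finset.sum_insert hbs, add_comm (zGame (-(g b)) i b), ← add_assoc]
      rw [ih]
      exact SE _ (-(g b)) i b
  have hx' : x ∈ S (u + v) := by rw [hv, ← hSE Finset.univ]; exact hx
  have hvapp : ∀ a : ∀ j, A j, v i a = -(g (restrictProf i a)) := by
    intro a
    have : v i a = ∑ b : Opp A i, zGame (-(g b)) i b i a := by
      rw [hv]; simp [Finset.sum_apply]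
    rw [this]
    have h1 : ∀ b : Opp A i, zGame (-(g b)) i b i a
        = if restrictProf i a = b then -(g b) else 0 := by
      intro b
      simp only [zGame, true_and]
      congr 1
      simp only [eq_iff_iff]
      constructor
      · intro h; funext k; exact h k
      · intro h k; rw [← h]; rfl
    simp_rw [h1]
    rw [Finset.sum_ite_eq]
    simp
  have hw0 : ∀ b : Opp A i, (u + v) i (merge i bi b) = 0 := by
    intro b
    have : (u + v) i (merge i bi b) = u i (merge i bi b) + v i (merge i bi b) := rfl
    rw [this, hvapp, restrict_merge]
    simp [hg]
  have hpir : (0 : ℝ) ≤ pir (u + v) i := by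
    have h1 : (⨅ b : Opp A i, (u + v) i (merge i bi b)) = 0 := by
      simp [hw0]
    have h2 := le_ciSup (f := fun ai : A i => ⨅ b : Opp A i, (u + v) i (merge i ai b))
      (Set.finite_range _).bddAbove bi
    rw [h1] at h2
    exact h2
  have hEadd : Eu (u + v) i x.1 = Eu u i x.1 + Eu v i x.1 := by
    simp [Eu, Pi.add_apply, mul_add, Finset.sum_add_distrib]
  set x' : ∀ j, A j → ℝ := Function.update x.1 i (pureStrat bi) with hx'def
  set Q : Opp A i → ℝ := fun b => ∏ k : {k : Fin n // k ≠ i}, x.1 k.1 (b k) with hQ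
  have hEv : Eu v i x.1 = -(∑ b : Opp A i, Q b * g b) := by
    rw [Eu, sum_split i]
    have : ∀ (ai : A i) (b : Opp A i),
        (∏ j, x.1 j (merge i ai b j)) * v i (merge i ai b)
          = x.1 i ai * (Q b * (-(g b))) := by
      intro ai b
      rw [hvapp, restrict_merge, prod_split i, merge_self]
      have : ∀ k : {k : Fin n // k ≠ i}, x.1 k.1 (merge i ai b k.1) = x.1 k.1 (b k) := by
        intro k; rw [merge_ne]
      simp_rw [this]
      ring
    simp_rw [this, ← Finset.mul_sum, ← Finset.sum_mul]
    rw [(x.2 i).2]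
    simp [Finset.mul_sum]
  have hEx' : Eu u i x' = ∑ b : Opp A i, Q b * g b := by
    rw [Eu, sum_split i]
    have key : ∀ (ai : A i) (b : Opp A i),
        (∏ j, x' j (merge i ai b j)) * u i (merge i ai b)
          = if ai = bi then Q b * g b else 0 := by
      intro ai b
      rw [prod_split i, merge_self]
      have h1 : ∀ k : {k : Fin n // k ≠ i}, x' k.1 (merge i ai b k.1) = x.1 k.1 (b k) := by
        intro k
        rw [merge_ne, hx'def, Function.update_of_ne k.2]
      simp_rw [h1]
      have h2 : x' i ai = if ai = bi then 1 else 0 := by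
        rw [hx'def, Function.update_self]; rfl
      rw [h2]
      by_cases h : ai = bi
      · subst h; simp [hQ, hg]
      · simp [h]
    simp_rw [key]
    rw [Finset.sum_comm]
    simp
  have hP := PIR (u + v) x hx' i
  rw [hEadd, hEv] at hP
  rw [hEx']
  linarith
end
end

section
/- Let S be a correlated-strategies solution of finite games. If S satisfies Strategic Equivalence (SE) and Pure Individual Rationality for All Recommendations (PIRAR), then for every game u, every element of S(u) is a correlated equilibrium of u, i.e. S(u) ⊆ CE(u). -/
open scoped Classical

noncomputable section

/-- A correlated strategy: a probability distribution on the set `A` of action profiles. -/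
abbrev CorrDist {n : ℕ} (A : Fin n → Type*) [∀ i, Fintype (A i)] : Type _ :=
  {x : (∀ j, A j) → ℝ // (∀ a, 0 ≤ x a) ∧ ∑ a, x a = 1}

/-- Any correlated-strategies solution satisfying Strategic Equivalence (SE) and
Pure Individual Rationality for All Recommendations (PIRAR) only outputs
correlated equilibria. -/
theorem statement3 {n : ℕ} (hn : 0 < n) (A : Fin n → Type*)
    [∀ i, Fintype (A i)] [∀ i, Nonempty (A i)]
    (S : Game A → Set (CorrDist A))
    (SE : ∀ (u : Game A) (c : ℝ) (i : Fin n) (b : Opp A i), S u = S (u + zGame c i b))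
    (PIRAR : ∀ u : Game A, ∀ x ∈ S u, ∀ (i : Fin n) (ai : A i),
      0 < ∑ a, (if a i = ai then x.1 a else 0) →
      ∑ a, (if a i = ai then x.1 a * u i a else 0) ≥
        pir u i * ∑ a, (if a i = ai then x.1 a else 0)) :
    ∀ u : Game A, ∀ x ∈ S u, ∀ (i : Fin n) (ai bi : A i),
      ∑ a, (if a i = ai then x.1 a * u i a else 0) ≥
        ∑ a, (if a i = ai then x.1 a * u i (Function.update a i bi) else 0) := by

  intro u x hx i ai bi
  classical
  by_cases hM0 : 0 < ∑ a, (if a i = ai then x.1 a else 0)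
  · -- main case
    set f : Opp A i → ℝ := fun b => - u i (merge i bi b) with hf
    set v : Game A := u + ∑ b : Opp A i, zGame (f b) i b with hv
    -- S u = S v by iterating SE
    have hSgen : ∀ s : Finset (Opp A i), S u = S (u + ∑ b ∈ s, zGame (f b) i b) := by
      intro s
      induction s using Finset.induction with
      | empty => simp
      | @insert b s hb ih =>
        rw [Finset.sum_insert hb, add_comm (zGame (f b) i b), ← add_assoc, ih]
        exact SE (u + ∑ b ∈ s, zGame (f b) i b) (f b) i b
    have hSv : x ∈ S v := by
      have := hSgen Finset.univ
      rw [hv]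
      rw [← this]
      exact hx
    -- key profile identities
    have hmerge_restrict : ∀ a : ∀ j, A j,
        merge i bi (fun k : {k : Fin n // k ≠ i} => a k.1) = Function.update a i bi := by
      intro a
      funext j
      by_cases h : j = i
      · subst h
        simp [merge, Function.update]
      · simp [merge, Function.update, h]
    have hvi : ∀ a : ∀ j, A j, v i a = u i a - u i (Function.update a i bi) := by
      intro a
      have hsum : (∑ b : Opp A i, zGame (f b) i b) i a
          = f (fun k : {k : Fin n // k ≠ i} => a k.1) := by
        have : ∀ b : Opp A i, zGame (f b) i b i a
            = if b = (fun k : {k : Fin n // k ≠ i} => a k.1) then f b else 0 := by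
          intro b
          unfold zGame
          by_cases hb : b = (fun k : {k : Fin n // k ≠ i} => a k.1)
          · subst hb; simp
          · rw [if_neg, if_neg hb]
            rintro ⟨-, h2⟩
            exact hb (funext fun k => (h2 k).symm)
        calc (∑ b : Opp A i, zGame (f b) i b) i a
            = ∑ b : Opp A i, zGame (f b) i b i a := by
              rw [Finset.sum_apply, Finset.sum_apply]
          _ = ∑ b : Opp A i, if b = (fun k : {k : Fin n // k ≠ i} => a k.1) then f b else 0 := by
              exact Finset.sum_congr rfl fun b _ => this b
          _ = f (fun k : {k : Fin n // k ≠ i} => a k.1) := by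
              simp
      have : v i a = u i a + (∑ b : Opp A i, zGame (f b) i b) i a := by
        rw [hv]; simp [Pi.add_apply]
      rw [this, hsum, hf]
      simp only [hmerge_restrict a]
      ring
    -- pir v i ≥ 0
    have hmerge_i : ∀ b : Opp A i, merge i bi b i = bi := by
      intro b; simp [merge]
    have hvbi : ∀ b : Opp A i, v i (merge i bi b) = 0 := by
      intro b
      rw [hvi]
      have : Function.update (merge i bi b) i bi = merge i bi b := by
        apply Function.update_eq_self_iff.mpr
        exact (hmerge_i b).symm
      rw [this]; ring
    have hpir : 0 ≤ pir v i := by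
      have h1 : (⨅ b : Opp A i, v i (merge i bi b)) = 0 := by
        have : (fun b : Opp A i => v i (merge i bi b)) = fun _ => (0 : ℝ) :=
          funext hvbi
        rw [iInf, this]
        simp
      have h2 : (⨅ b : Opp A i, v i (merge i bi b)) ≤ pir v i := by
        apply le_ciSup (f := fun ai' : A i => ⨅ b : Opp A i, v i (merge i ai' b))
        exact (Set.finite_range _).bddAbove
      linarith [h1 ▸ h2]
    -- apply PIRAR to v
    have hP := PIRAR v x hSv i ai hM0
    have hnn : 0 ≤ ∑ a, (if a i = ai then x.1 a * v i a else 0) := by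
      have := mul_nonneg hpir (le_of_lt hM0)
      linarith
    have hsplit : ∑ a, (if a i = ai then x.1 a * v i a else 0)
        = (∑ a, (if a i = ai then x.1 a * u i a else 0))
          - ∑ a, (if a i = ai then x.1 a * u i (Function.update a i bi) else 0) := by
      rw [← Finset.sum_sub_distrib]
      apply Finset.sum_congr rfl
      intro a _
      by_cases h : a i = ai
      · simp only [h, if_true, hvi a]; ring
      · simp [h]
    linarith [hsplit ▸ hnn]
  · -- marginal zero case
    have hnn : ∀ a : ∀ j, A j, 0 ≤ (if a i = ai then x.1 a else 0) := by
      intro a; split_ifs with h; exacts [x.2.1 a, le_rfl]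
    have hM : ∑ a, (if a i = ai then x.1 a else 0) = 0 := by
      have : (0:ℝ) ≤ ∑ a, (if a i = ai then x.1 a else 0) := Finset.sum_nonneg (fun a _ => hnn a)
      push_neg at hM0
      linarith
    have hz : ∀ a : ∀ j, A j, a i = ai → x.1 a = 0 := by
      intro a ha
      have := (Finset.sum_eq_zero_iff_of_nonneg (fun a _ => hnn a)).mp hM a (Finset.mem_univ a)
      simpa [ha] using this
    have h1 : ∑ a, (if a i = ai then x.1 a * u i a else 0) = 0 := by
      apply Finset.sum_eq_zero
      intro a _
      by_cases h : a i = ai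
      · simp [h, hz a h]
      · simp [h]
    have h2 : ∑ a, (if a i = ai then x.1 a * u i (Function.update a i bi) else 0) = 0 := by
      apply Finset.sum_eq_zero
      intro a _
      by_cases h : a i = ai
      · simp [h, hz a h]
      · simp [h]
    rw [h1, h2]
end
end

section
/- Let S be a correlated-strategies solution of finite games. If S satisfies Strategic Equivalence (SE) and the Simultaneous Maximizer axiom (SM), then for every game u and every pure Nash equilibrium a of u, the Dirac distribution δ_a ∈ Δ(A) concentrated on a belongs to S(u). -/
open scoped Classical

noncomputable section

/-- The Dirac distribution concentrated on the profile `a`. -/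
def diracDist {n : ℕ} {A : Fin n → Type*} [∀ i, Fintype (A i)] (a : ∀ j, A j) :
    CorrDist A :=
  ⟨fun b => if b = a then 1 else 0,
   ⟨fun b => by by_cases h : b = a <;> simp [h], by simp⟩⟩

lemma merge_eq_update {n : ℕ} {A : Fin n → Type*} (i : Fin n) (ai : A i) (a : ∀ j, A j) :
    merge i ai (fun k => a k.1) = Function.update a i ai := by
  funext j
  by_cases h : j = i
  · subst h; simp [merge, Function.update]
  · simp [merge, Function.update, h]

lemma se_sum {n : ℕ} {A : Fin n → Type*} [∀ i, Fintype (A i)]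
    (S : Game A → Set (CorrDist A))
    (SE : ∀ (u : Game A) (c : ℝ) (i : Fin n) (b : Opp A i), S u = S (u + zGame c i b))
    (s : Finset (Σ i : Fin n, Opp A i)) (c : (Σ i : Fin n, Opp A i) → ℝ) (u : Game A) :
    S u = S (u + ∑ t ∈ s, zGame (c t) t.1 t.2) := by
  classical
  induction s using Finset.cons_induction with
  | empty => simp
  | cons t s ht ih =>
      rw [Finset.sum_cons]
      have h : u + (zGame (c t) t.1 t.2 + ∑ t ∈ s, zGame (c t) t.1 t.2)
           = (u + ∑ t ∈ s, zGame (c t) t.1 t.2) + zGame (c t) t.1 t.2 := by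
        funext j x
        simp only [Pi.add_apply]
        ring
      rw [h, ← SE]
      exact ih

/-- Any correlated-strategies solution satisfying Strategic Equivalence (SE) and the
Simultaneous Maximizer axiom (SM) contains the Dirac distribution on every pure
Nash equilibrium. -/
theorem statement6 {n : ℕ} (hn : 0 < n) (A : Fin n → Type*)
    [∀ i, Fintype (A i)] [∀ i, Nonempty (A i)]
    (S : Game A → Set (CorrDist A))
    (SE : ∀ (u : Game A) (c : ℝ) (i : Fin n) (b : Opp A i), S u = S (u + zGame c i b))
    (SM : ∀ (u : Game A) (a : ∀ j, A j),
      (∀ (i : Fin n) (b : ∀ j, A j), u i a ≥ u i b) → diracDist a ∈ S u) :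
    ∀ u : Game A, ∀ a : ∀ j, A j, IsPNE u a → diracDist a ∈ S u := by
  classical
  intro u a ha
  set M : ∀ i : Fin n, Opp A i → ℝ := fun i b => ⨆ ai : A i, u i (merge i ai b) with hMdef
  have hbdd : ∀ (i : Fin n) (b : Opp A i),
      BddAbove (Set.range fun ai : A i => u i (merge i ai b)) :=
    fun i b => (Set.finite_range _).bddAbove
  have key := se_sum S SE Finset.univ (fun t => -(M t.1 t.2)) u
  rw [key]
  set v : Game A := u + ∑ t ∈ (Finset.univ : Finset (Σ i : Fin n, Opp A i)),
    zGame (-(M t.1 t.2)) t.1 t.2 with hv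
  have hval : ∀ (j : Fin n) (x : ∀ k, A k), v j x = u j x - M j (fun k => x k.1) := by
    intro j x
    have happ : v j x = u j x + ∑ t ∈ (Finset.univ : Finset (Σ i : Fin n, Opp A i)),
        zGame (-(M t.1 t.2)) t.1 t.2 j x := by
      simp [hv, Finset.sum_apply]
    have hs : ∑ t ∈ (Finset.univ : Finset (Σ i : Fin n, Opp A i)),
        zGame (-(M t.1 t.2)) t.1 t.2 j x = -(M j (fun k => x k.1)) := by
      rw [Finset.sum_eq_single (⟨j, fun k => x k.1⟩ : Σ i : Fin n, Opp A i)]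
      · simp [zGame]
      · rintro ⟨i, b⟩ - hne
        simp only [zGame]
        rw [if_neg]
        rintro ⟨rfl, hb⟩
        exact hne (by
          congr 1
          funext k
          exact (hb k).symm)
      · intro h; exact absurd (Finset.mem_univ _) h
    rw [happ, hs]; ring
  apply SM
  intro i x
  have hMa : M i (fun k => a k.1) = u i a := by
    apply le_antisymm
    · apply ciSup_le
      intro ai
      rw [merge_eq_update]
      exact ha i ai
    · have := le_ciSup (hbdd i (fun k => a k.1)) (a i)
      rwa [merge_eq_update, Function.update_eq_self] at this
  have hux : u i x ≤ M i (fun k => x k.1) := by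
    have := le_ciSup (hbdd i (fun k => x k.1)) (x i)
    rwa [merge_eq_update, Function.update_eq_self] at this
  rw [hval, hval, hMa]
  linarith
end
end

section
/- Suppose there are at least two players whose action sets each contain at least two actions. Then there is no pure-strategies solution S of finite games that satisfies both Strategic Equivalence (SE) and the Unique Simultaneous Maximizer axiom (USM). -/
open scoped Classical

noncomputable section

/-- If at least two players have at least two actions each, then no pure-strategies
solution satisfies both Strategic Equivalence (SE) and the Unique Simultaneous
Maximizer axiom (USM). -/
theorem statement9 {n : ℕ} (A : Fin n → Type*)
    [∀ i, Fintype (A i)] [∀ i, Nonempty (A i)]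
    (i j : Fin n) (hij : i ≠ j)
    (hi : 1 < Fintype.card (A i)) (hj : 1 < Fintype.card (A j)) :
    ¬ ∃ S : Game A → Set (∀ k, A k),
      (∀ (u : Game A) (c : ℝ) (k : Fin n) (b : Opp A k), S u = S (u + zGame c k b)) ∧
      (∀ (u : Game A) (a : ∀ k, A k),
        (∀ (k : Fin n) (b : ∀ l, A l), b ≠ a → u k a > u k b) → S u = {a}) := by

  rintro ⟨S, hSE, hUSM⟩
  obtain ⟨x, x', hxx⟩ := Fintype.exists_pair_of_one_lt_card hi
  obtain ⟨y, y', hyy⟩ := Fintype.exists_pair_of_one_lt_card hj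
  have d : ∀ k, A k := fun k => Classical.arbitrary _
  set a : ∀ k, A k := Function.update (Function.update d i x) j y with ha
  set a' : ∀ k, A k := Function.update (Function.update d i x') j y' with ha'
  have hai : a i = x := by
    rw [ha, Function.update_of_ne hij, Function.update_self]
  have hai' : a' i = x' := by
    rw [ha', Function.update_of_ne hij, Function.update_self]
  have haj : a j = y := by rw [ha, Function.update_self]
  have haj' : a' j = y' := by rw [ha', Function.update_self]
  have hane : a ≠ a' := fun h => hxx (by rw [← hai, ← hai', h])
  -- for every k there is l ≠ k with a l ≠ a' l
  have hdiff : ∀ k : Fin n, ∃ l : Fin n, l ≠ k ∧ a l ≠ a' l := by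
    intro k
    by_cases hk : k = i
    · exact ⟨j, fun h => hij (hk ▸ h.symm ▸ rfl), by rw [haj, haj']; exact hyy⟩
    · exact ⟨i, fun h => hk h.symm, by rw [hai, hai']; exact hxx⟩
  set f : Fin n → Game A := fun k => zGame 2 k (fun m => a' m.1) with hf
  set w : Game A := fun _ b => (if b = a then (1:ℝ) else 0) + (if b = a' then (1/2:ℝ) else 0)
    with hw
  set w' : Game A := w + ∑ l, f l with hw'
  have chain : ∀ (L : List (Fin n)) (u : Game A), S u = S (u + (L.map f).sum) := by
    intro L
    induction L with
    | nil => intro u; simp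
    | cons k L ih =>
      intro u
      calc S u = S (u + f k) := hSE u 2 k _
        _ = S (u + f k + (L.map f).sum) := ih _
        _ = S (u + ((k :: L).map f).sum) := by
            rw [List.map_cons, List.sum_cons, add_assoc]
  have hSww' : S w = S w' := by
    have h := chain Finset.univ.toList w
    rwa [Finset.sum_map_toList] at h
  have hw'eval : ∀ (k : Fin n) (b : ∀ l, A l),
      w' k b = w k b +
        (if (∀ m : {m : Fin n // m ≠ k}, b m.1 = a' m.1) then (2:ℝ) else 0) := by
    intro k b
    have h1 : w' k b = w k b + (∑ l, f l) k b := rfl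
    rw [h1]
    congr 1
    rw [Finset.sum_apply, Finset.sum_apply]
    rw [Finset.sum_eq_single k]
    · simp [hf, zGame]
    · intro l _ hlk
      simp only [hf, zGame]
      rw [if_neg]
      rintro ⟨h, -⟩
      exact hlk h.symm
    · intro h; exact absurd (Finset.mem_univ k) h
  have hSwa : S w = {a} := by
    apply hUSM w a
    intro k b hb
    simp only [hw, eq_self_iff_true]
    rw [if_true, if_neg hane, if_neg hb]
    split_ifs <;> norm_num
  have hSwa' : S w' = {a'} := by
    apply hUSM w' a'
    intro k b hb
    rw [hw'eval, hw'eval]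
    rw [if_pos (fun m => rfl : ∀ m : {m : Fin n // m ≠ k}, a' m.1 = a' m.1)]
    simp only [hw, eq_self_iff_true]
    rw [if_neg (Ne.symm hane), if_true, if_neg hb]
    by_cases hcb : ∀ m : {m : Fin n // m ≠ k}, b m.1 = a' m.1
    · rw [if_pos hcb]
      have hba : b ≠ a := by
        obtain ⟨l, hlk, hla⟩ := hdiff k
        intro hba
        exact hla (by rw [← hcb ⟨l, hlk⟩, hba])
      rw [if_neg hba]
      norm_num
    · rw [if_neg hcb]
      split_ifs <;> norm_num
  have : ({a} : Set (∀ k, A k)) = {a'} := by rw [← hSwa, hSww', hSwa']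
  exact hane (Set.singleton_eq_singleton_iff.mp this)
end
end

section
/- Let u be a finite game whose payoffs are bounded by L (i.e. |u_i(b)| < L for all players i and all profiles b), and let a be a pure Nash equilibrium of u. Then in the game v = u + Σ_{i∈[n]} z(2L, i, a_{-i}), the profile a is a simultaneous maximizer: v_i(a) ≥ v_i(b) for every player i and every profile b ∈ A. -/
open scoped Classical

noncomputable section

/-- If the payoffs of `u` are bounded by `L` and `a` is a pure Nash equilibrium of `u`,
then in `v = u + ∑ᵢ z(2L, i, a₋ᵢ)` the profile `a` is a simultaneous maximizer. -/
theorem statement10 {n : ℕ} (hn : 0 < n) (A : Fin n → Type*)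
    [∀ i, Fintype (A i)] [∀ i, Nonempty (A i)]
    (u : Game A) (L : ℝ) (hL : ∀ (i : Fin n) (b : ∀ j, A j), |u i b| < L)
    (a : ∀ j, A j) (ha : IsPNE u a)
    (v : Game A) (hv : v = u + ∑ i : Fin n, zGame (2 * L) i (fun k => a k.1)) :
    ∀ (i : Fin n) (b : ∀ j, A j), v i a ≥ v i b := by
  subst hv
  intro i b
  have hs : ∀ c : ∀ j, A j,
      (∑ i' : Fin n, zGame (2*L) i' (fun k => a k.1)) i c
        = if (∀ k : {k : Fin n // k ≠ i}, c k.1 = a k.1) then 2*L else 0 := by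
    intro c
    have h1 : (∑ i' : Fin n, zGame (2*L) i' (fun k => a k.1)) i c
        = ∑ i' : Fin n, zGame (2*L) i' (fun k => a k.1) i c := by
      simp [Finset.sum_apply]
    rw [h1, Finset.sum_eq_single i]
    · simp [zGame]
    · intro j _ hj
      simp [zGame, Ne.symm hj]
    · simp
  obtain ⟨hva1, hva2⟩ := abs_lt.mp (hL i a)
  obtain ⟨hvb1, hvb2⟩ := abs_lt.mp (hL i b)
  show u i a + _ ≥ u i b + _
  rw [hs a, hs b]
  rw [if_pos (show ∀ k : {k : Fin n // k ≠ i}, a k.1 = a k.1 from fun k => rfl)]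
  by_cases hb : ∀ k : {k : Fin n // k ≠ i}, b k.1 = a k.1
  · rw [if_pos hb]
    have hbeq : b = Function.update a i (b i) := by
      funext j
      by_cases h : j = i
      · subst h; simp
      · rw [Function.update_of_ne h]; exact hb ⟨j, h⟩
    have := ha i (b i)
    rw [← hbeq] at this
    linarith
  · rw [if_neg hb]
    linarith
end
end

section
/- Let u be a finite game with payoffs in [-1,1], and let a be a strict pure Nash equilibrium of u. Then in the game v = u + Σ_{i∈[n]} z(3, i, a_{-i}), the profile a is a strict simultaneous maximizer: v_i(a) > v_i(b) for every player i and every profile b ∈ A with b ≠ a. -/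
open scoped Classical

noncomputable section

/-- If the payoffs of `u` lie in `[-1, 1]` and `a` is a strict pure Nash equilibrium
of `u`, then in `v = u + ∑ᵢ z(3, i, a₋ᵢ)` the profile `a` is a strict simultaneous
maximizer. -/
theorem statement11 {n : ℕ} (hn : 0 < n) (A : Fin n → Type*)
    [∀ i, Fintype (A i)] [∀ i, Nonempty (A i)]
    (u : Game A) (hL : ∀ (i : Fin n) (b : ∀ j, A j), |u i b| ≤ 1)
    (a : ∀ j, A j)
    (ha : ∀ (i : Fin n) (bi : A i), bi ≠ a i → u i (Function.update a i bi) < u i a)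
    (v : Game A) (hv : v = u + ∑ i : Fin n, zGame 3 i (fun k => a k.1)) :
    ∀ (i : Fin n) (b : ∀ j, A j), b ≠ a → v i a > v i b := by
  subst hv
  intro i b hb
  have hz : ∀ c : ∀ j, A j,
      (∑ j : Fin n, zGame 3 j (fun k => a k.1)) i c
        = if (∀ k : {k : Fin n // k ≠ i}, c k.1 = a k.1) then (3:ℝ) else 0 := by
    intro c
    have h1 : (∑ j : Fin n, zGame 3 j (fun k => a k.1)) i c
        = ∑ j : Fin n, zGame 3 j (fun k => a k.1) i c := by
      simp [Finset.sum_apply]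
    rw [h1, Finset.sum_eq_single i]
    · simp [zGame]
    · intro j _ hj
      simp only [zGame, ite_eq_right_iff, and_imp]
      intro h; exact absurd h.symm hj
    · simp
  have hsa : (u + ∑ j : Fin n, zGame 3 j (fun k => a k.1)) i a = u i a + 3 := by
    simp only [Pi.add_apply, hz]
    simp
  by_cases hbo : ∀ k : {k : Fin n // k ≠ i}, b k.1 = a k.1
  · have hbi : b i ≠ a i := by
      intro h
      apply hb
      funext j
      by_cases hji : j = i
      · subst hji; exact h
      · exact hbo ⟨j, hji⟩
    have hupd : Function.update a i (b i) = b := by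
      funext j
      by_cases hji : j = i
      · subst hji; simp
      · simp [Function.update, hji, hbo ⟨j, hji⟩]
    have hlt : u i b < u i a := by
      have := ha i (b i) hbi
      rwa [hupd] at this
    have hsb : (u + ∑ j : Fin n, zGame 3 j (fun k => a k.1)) i b = u i b + 3 := by
      simp only [Pi.add_apply, hz, if_pos hbo]
    rw [hsa, hsb]; linarith
  · have hsb : (u + ∑ j : Fin n, zGame 3 j (fun k => a k.1)) i b = u i b := by
      simp only [Pi.add_apply, hz, if_neg hbo]; ring
    have h1 := abs_le.mp (hL i a)
    have h2 := abs_le.mp (hL i b)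
    rw [hsa, hsb]; linarith
end
end

section
/- Suppose there are at least two players whose action sets each contain at least two actions. Then there is no mixed-strategies solution S of finite games that satisfies both Strategic Equivalence (SE) and the Unique Simultaneous Maximizer axiom (USM). -/
open scoped Classical

noncomputable section

/-- The degenerate mixed-strategy profile placing probability `1` on `a i` for each `i`. -/
def diracProfile {n : ℕ} {A : Fin n → Type*} [∀ i, Fintype (A i)] (a : ∀ j, A j) :
    MixedProfile A :=
  ⟨fun i c => if c = a i then 1 else 0,
   fun i => ⟨fun c => by by_cases h : c = a i <;> simp [h], by simp⟩⟩

/-- If at least two players have at least two actions each, then no mixed-strategies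
solution satisfies both Strategic Equivalence (SE) and the Unique Simultaneous
Maximizer axiom (USM). -/
theorem statement13 {n : ℕ} (A : Fin n → Type*)
    [∀ i, Fintype (A i)] [∀ i, Nonempty (A i)]
    (i j : Fin n) (hij : i ≠ j)
    (hi : 1 < Fintype.card (A i)) (hj : 1 < Fintype.card (A j)) :
    ¬ ∃ S : Game A → Set (MixedProfile A),
      (∀ (u : Game A) (c : ℝ) (k : Fin n) (b : Opp A k), S u = S (u + zGame c k b)) ∧
      (∀ (u : Game A) (a : ∀ k, A k),
        (∀ (k : Fin n) (b : ∀ l, A l), b ≠ a → u k a > u k b) →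
          S u = {diracProfile a}) := by
  rintro ⟨S, hSE, hUSM⟩
  classical
  obtain ⟨ai', hai'⟩ := Fintype.exists_ne_of_one_lt_card hi (Classical.arbitrary (A i))
  obtain ⟨aj', haj'⟩ := Fintype.exists_ne_of_one_lt_card hj (Classical.arbitrary (A j))
  set a : ∀ k, A k := fun k => Classical.arbitrary (A k) with ha_def
  set a' : ∀ k, A k := Function.update (Function.update a i ai') j aj' with ha'_def
  have ha'j : a' j = aj' := by simp [ha'_def]
  have ha'i : a' i = ai' := by
    simp [ha'_def, Function.update_of_ne hij]
  have hdi : a' i ≠ a i := by rw [ha'i]; exact hai'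
  have hdj : a' j ≠ a j := by rw [ha'j]; exact haj'
  have haa' : a ≠ a' := fun h => hdi (by rw [← h])
  -- the two games
  set v : Game A := fun k b =>
    (if b = a then (3 : ℝ) else 0) + (if b = a' then 2 else 0) +
      (if b k = a k then 1 else 0) with hv_def
  set w : Game A := v + ∑ k : Fin n, zGame 3 k (fun l => a' l.1) with hw_def
  -- strategic equivalence of v and w
  have key : ∀ s : Finset (Fin n),
      S v = S (v + ∑ k ∈ s, zGame 3 k (fun l => a' l.1)) := by
    intro s
    induction s using Finset.induction with
    | empty => simp
    | insert k s h ih =>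
      rw [Finset.sum_insert h, add_comm (zGame 3 k _), ← add_assoc, ← hSE]
      exact ih
  have hvw : S v = S w := key Finset.univ
  -- pointwise formula for w
  have hw : ∀ (k : Fin n) (b : ∀ l, A l),
      w k b = v k b +
        (if (∀ l : {l : Fin n // l ≠ k}, b l.1 = a' l.1) then 3 else 0) := by
    intro k b
    have : (∑ k' : Fin n, zGame 3 k' (fun l => a' l.1)) k b
        = (if (∀ l : {l : Fin n // l ≠ k}, b l.1 = a' l.1) then 3 else 0) := by
      rw [Finset.sum_apply, Finset.sum_apply]
      rw [Finset.sum_eq_single k]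
      · simp [zGame]
      · intro k' _ hk'
        simp only [zGame]
        rw [if_neg]
        rintro ⟨h1, -⟩
        exact hk' h1.symm
      · intro h; exact absurd (Finset.mem_univ k) h
    rw [hw_def]
    simp only [Pi.add_apply]
    rw [this]
  -- a and a' differ on opponents of any player
  have hopp : ∀ k : Fin n, ¬ (∀ l : {l : Fin n // l ≠ k}, a l.1 = a' l.1) := by
    intro k h
    by_cases hk : k = i
    · exact hdj (h ⟨j, by rw [hk]; exact (Ne.symm hij)⟩).symm
    · exact hdi (h ⟨i, fun h' => hk h'.symm⟩).symm
  -- values of v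
  have hva : ∀ k, v k a = 4 := by
    intro k
    simp only [hv_def]
    norm_num [haa']
  have hvb : ∀ (k : Fin n) (b : ∀ l, A l), b ≠ a → v k b ≤ 3 := by
    intro k b hb
    simp only [hv_def, if_neg hb]
    split_ifs <;> norm_num
  have hvb1 : ∀ (k : Fin n) (b : ∀ l, A l), b ≠ a → b ≠ a' → v k b ≤ 1 := by
    intro k b hb hb'
    simp only [hv_def, if_neg hb, if_neg hb']
    split_ifs <;> norm_num
  have hva' : ∀ k, 2 ≤ v k a' := by
    intro k
    simp only [hv_def, if_neg (Ne.symm haa'), if_pos rfl]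
    split_ifs <;> norm_num
  -- USM for v
  have hSv : S v = {diracProfile a} := by
    apply hUSM
    intro k b hb
    rw [hva k]
    calc v k b ≤ 3 := hvb k b hb
    _ < 4 := by norm_num
  -- USM for w
  have hSw : S w = {diracProfile a'} := by
    apply hUSM
    intro k b hb
    have hwa' : 5 ≤ w k a' := by
      rw [hw k a', if_pos (fun l => rfl)]
      linarith [hva' k]
    have hwb : w k b ≤ 4 := by
      rw [hw k b]
      by_cases hba : b = a
      · subst hba
        rw [if_neg (hopp k), hva k]
        norm_num
      · have h1 := hvb1 k b hba hb
        split_ifs <;> linarith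
    linarith
  rw [hSv, hSw] at hvw
  have hdd : diracProfile a = diracProfile a' := by
    have := hvw ▸ (Set.mem_singleton (diracProfile a))
    exact this
  have := congrFun (congrFun (congrArg Subtype.val hdd) i) (a i)
  simp only [diracProfile, if_pos rfl] at this
  rw [if_neg (Ne.symm hdi)] at this
  norm_num at this
end
end

section
/- Let S be a pure-strategies solution of continuous convex games on compact convex action sets. If S satisfies Continuous Strategic Equivalence (CSE) and Pure Individual Rationality (PIR), then for every continuous convex game u, every element of S(u) is a pure Nash equilibrium of u, i.e. S(u) ⊆ PNE(u). -/
open scoped Classical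

noncomputable section

variable {n : ℕ} {E : Fin n → Type*}
  [∀ i, NormedAddCommGroup (E i)] [∀ i, NormedSpace ℝ (E i)]

/-- Action profiles: one action from each player's action set `A i`. -/
abbrev CProfile (A : ∀ i, Set (E i)) : Type _ := ∀ j, ↥(A j)

/-- A game with action sets `A i`: a payoff function for each player. -/
abbrev CGame (A : ∀ i, Set (E i)) : Type _ := Fin n → CProfile A → ℝ

/-- Opponents' action profiles of player `i`. -/
abbrev COpp (A : ∀ i, Set (E i)) (i : Fin n) : Type _ :=
  ∀ j : {j : Fin n // j ≠ i}, ↥(A j.1)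

/-- The game `z(i, f)`: player `i` receives payoff `f(a₋ᵢ)` at every profile `a`
(irrespective of his own action); every other player always gets `0`. -/
def zC (A : ∀ i, Set (E i)) (i : Fin n) (f : COpp A i → ℝ) : CGame A :=
  fun j a => if j = i then f (fun k => a k.1) else 0

/-- The full profile obtained from own action `ai` of player `i` and an opponents'
profile `b`. -/
def mergeC (A : ∀ i, Set (E i)) (i : Fin n) (ai : ↥(A i)) (b : COpp A i) :
    CProfile A :=
  fun j => if h : j = i then cast (congrArg (fun t => ↥(A t)) h.symm) ai else b ⟨j, h⟩

/-- The pure individually rational value of player `i`: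
`pir_i(u) = max_{a_i} min_{a_{-i}} u_i(a_i, a_{-i})`. -/
def pirC (A : ∀ i, Set (E i)) (u : CGame A) (i : Fin n) : ℝ :=
  ⨆ ai : ↥(A i), ⨅ b : COpp A i, u i (mergeC A i ai b)

/-- A continuous convex game: each payoff function is continuous, and each player's
payoff is a convex function of his own action (for every fixed opponents' profile). -/
def IsCCGame (A : ∀ i, Set (E i)) (hconv : ∀ i, Convex ℝ (A i)) (u : CGame A) : Prop :=
  (∀ i, Continuous (u i)) ∧
  ∀ (i : Fin n) (a : CProfile A) (x y : ↥(A i)) (s t : ℝ)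
    (hs : 0 ≤ s) (ht : 0 ≤ t) (hst : s + t = 1),
    u i (Function.update a i ⟨s • (x : E i) + t • (y : E i),
        hconv i x.2 y.2 hs ht hst⟩) ≤
      s * u i (Function.update a i x) + t * u i (Function.update a i y)

/-- `a` is a pure Nash equilibrium of `u`. -/
def IsPNEc (A : ∀ i, Set (E i)) (u : CGame A) (a : CProfile A) : Prop :=
  ∀ (i : Fin n) (bi : ↥(A i)), u i (Function.update a i bi) ≤ u i a

/-- `a` is a strict pure Nash equilibrium of `u`. -/
def IsStrictPNEc (A : ∀ i, Set (E i)) (u : CGame A) (a : CProfile A) : Prop :=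
  ∀ (i : Fin n) (bi : ↥(A i)), bi ≠ a i → u i (Function.update a i bi) < u i a


section Aux

variable {n : ℕ} {E : Fin n → Type*}
  [∀ i, NormedAddCommGroup (E i)] [∀ i, NormedSpace ℝ (E i)]

lemma mergeC_ne (A : ∀ i, Set (E i)) (i : Fin n) (ai : ↥(A i)) (b : COpp A i)
    (j : Fin n) (h : j ≠ i) : mergeC A i ai b j = b ⟨j, h⟩ := by
  simp [mergeC, h]

lemma mergeC_eq (A : ∀ i, Set (E i)) (i : Fin n) (ai : ↥(A i)) (b : COpp A i) :
    mergeC A i ai b i = ai := by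
  simp [mergeC]

lemma continuous_mergeC (A : ∀ i, Set (E i)) (i : Fin n) (ai : ↥(A i)) :
    Continuous (fun b : COpp A i => mergeC A i ai b) := by
  apply continuous_pi
  intro j
  by_cases h : j = i
  · subst h
    simp only [mergeC, dif_pos rfl]
    exact continuous_const
  · simp only [mergeC, dif_neg h]
    exact continuous_apply _

lemma restrict_mergeC (A : ∀ i, Set (E i)) (i : Fin n) (ai : ↥(A i)) (b : COpp A i) :
    (fun k : {j : Fin n // j ≠ i} => mergeC A i ai b k.1) = b := by
  funext k
  rw [mergeC_ne A i ai b k.1 k.2]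

lemma mergeC_restrict (A : ∀ i, Set (E i)) (i : Fin n) (bi : ↥(A i)) (x : CProfile A) :
    mergeC A i bi (fun k => x k.1) = Function.update x i bi := by
  funext j
  by_cases h : j = i
  · subst h
    simp [mergeC, Function.update]
  · simp [mergeC, Function.update, h]

lemma ccgame_add_zC (A : ∀ i, Set (E i)) (hconv : ∀ i, Convex ℝ (A i))
    (u : CGame A) (hu : IsCCGame A hconv u) (i : Fin n) (f : COpp A i → ℝ)
    (hf : Continuous f) : IsCCGame A hconv (u + zC A i f) := by
  constructor
  · intro j
    by_cases h : j = i
    · subst h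
      have he : (u + zC A j f) j = fun a => u j a + f (fun k => a k.1) := by
        funext a; simp [zC]
      rw [he]
      exact (hu.1 j).add (hf.comp (continuous_pi fun k => continuous_apply k.1))
    · have he : (u + zC A i f) j = u j := by
        funext a; simp [zC, h]
      rw [he]
      exact hu.1 j
  · intro j a xx yy s t hs ht hst
    have base := hu.2 j a xx yy s t hs ht hst
    by_cases h : j = i
    · subst h
      have key : ∀ v : ↥(A j), zC A j f j (Function.update a j v) = f (fun k => a k.1) := by
        intro v
        have hr : (fun k : {k : Fin n // k ≠ j} => Function.update a j v k.1)
            = fun k : {k : Fin n // k ≠ j} => a k.1 := by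
          funext k; exact Function.update_of_ne k.2 _ a
        simp [zC, hr]
      simp only [Pi.add_apply, key]
      set c := f (fun k => a k.1)
      have h2 : s * (u j (Function.update a j xx) + c) + t * (u j (Function.update a j yy) + c)
          = s * u j (Function.update a j xx) + t * u j (Function.update a j yy) + c := by
        linear_combination c * hst
      linarith
    · have key : ∀ v : ↥(A j), zC A i f j (Function.update a j v) = 0 := by
        intro v; simp [zC, h]
      simp only [Pi.add_apply, key]
      have h2 : s * (u j (Function.update a j xx) + 0) + t * (u j (Function.update a j yy) + 0)
          = s * u j (Function.update a j xx) + t * u j (Function.update a j yy) := by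
        ring
      linarith

end Aux

/-- Any pure-strategies solution of continuous convex games satisfying Continuous
Strategic Equivalence (CSE) and Pure Individual Rationality (PIR) only outputs
pure Nash equilibria. -/
theorem statement14 {n : ℕ} (hn : 0 < n) {E : Fin n → Type*}
    [∀ i, NormedAddCommGroup (E i)] [∀ i, NormedSpace ℝ (E i)]
    (A : ∀ i, Set (E i)) (hA : ∀ i, IsCompact (A i)) (hconv : ∀ i, Convex ℝ (A i))
    (hne : ∀ i, (A i).Nonempty)
    (S : CGame A → Set (CProfile A))
    (CSE : ∀ u : CGame A, IsCCGame A hconv u →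
      ∀ (i : Fin n) (f : COpp A i → ℝ), Continuous f → S u = S (u + zC A i f))
    (PIR : ∀ u : CGame A, IsCCGame A hconv u →
      ∀ x ∈ S u, ∀ i : Fin n, u i x ≥ pirC A u i) :
    ∀ u : CGame A, IsCCGame A hconv u → ∀ x ∈ S u, IsPNEc A u x := by
  intro u hu x hx i bi
  haveI : ∀ j : Fin n, Nonempty (↥(A j)) := fun j => ⟨⟨(hne j).choose, (hne j).choose_spec⟩⟩
  haveI : Nonempty (COpp A i) := ⟨fun k => Classical.arbitrary _⟩
  haveI : ∀ j : Fin n, CompactSpace (↥(A j)) := fun j => isCompact_iff_compactSpace.mp (hA j)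
  set f : COpp A i → ℝ := fun b => - u i (mergeC A i bi b) with hfdef
  have hf : Continuous f := ((hu.1 i).comp (continuous_mergeC A i bi)).neg
  set u' : CGame A := u + zC A i f with hu'def
  have hu' : IsCCGame A hconv u' := ccgame_add_zC A hconv u hu i f hf
  have hx' : x ∈ S u' := by
    rw [hu'def, ← CSE u hu i f hf]
    exact hx
  -- u' i a = u i a - u i (mergeC A i bi (a restricted))
  have hval : ∀ a : CProfile A, u' i a = u i a - u i (mergeC A i bi (fun k => a k.1)) := by
    intro a
    simp [hu'def, zC, hfdef]
    ring
  -- player i guarantees 0 with bi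
  have hzero : ∀ b : COpp A i, u' i (mergeC A i bi b) = 0 := by
    intro b
    rw [hval, restrict_mergeC]
    ring
  -- bounds
  obtain ⟨C, hC⟩ : ∃ C : ℝ, ∀ a : CProfile A, u' i a ≤ C := by
    obtain ⟨C, hC⟩ := (isCompact_range (hu'.1 i)).bddAbove
    exact ⟨C, fun a => hC ⟨a, rfl⟩⟩
  obtain ⟨D, hD⟩ : ∃ D : ℝ, ∀ a : CProfile A, D ≤ u' i a := by
    obtain ⟨D, hD⟩ := (isCompact_range (hu'.1 i)).bddBelow
    exact ⟨D, fun a => hD ⟨a, rfl⟩⟩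
  have hpir : (0 : ℝ) ≤ pirC A u' i := by
    have hinf : (⨅ b : COpp A i, u' i (mergeC A i bi b)) = 0 := by
      simp [hzero]
    have hb : BddAbove (Set.range fun ai : ↥(A i) =>
        ⨅ b : COpp A i, u' i (mergeC A i ai b)) := by
      refine ⟨C, ?_⟩
      rintro _ ⟨ai, rfl⟩
      refine ciInf_le_of_le ⟨D, ?_⟩ (Classical.arbitrary _) (hC _)
      rintro _ ⟨b, rfl⟩
      exact hD _
    have := le_ciSup hb bi
    rw [hinf] at this
    exact le_trans this (le_of_eq rfl)
  have hPIR := PIR u' hu' x hx' i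
  have : 0 ≤ u' i x := le_trans hpir hPIR
  rw [hval x, mergeC_restrict] at this
  linarith
end
end

section
/- Let S be a pure-strategies solution of continuous convex games on compact convex action sets. If S satisfies Continuous Strategic Equivalence (CSE) and the Simultaneous Maximizer axiom (SM), then for every continuous convex game u, every pure Nash equilibrium of u belongs to S(u), i.e. PNE(u) ⊆ S(u). -/
open scoped Classical

noncomputable section

variable {n : ℕ} {E : Fin n → Type*}
  [∀ i, NormedAddCommGroup (E i)] [∀ i, NormedSpace ℝ (E i)]

set_option linter.unusedSectionVars false in
lemma merge_restrict_s15 (A : ∀ i, Set (E i)) (i : Fin n) (x : ↥(A i)) (a : CProfile A) :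
    mergeC A i x (fun k => a k.1) = Function.update a i x := by
  funext j
  unfold mergeC
  by_cases h : j = i
  · subst h; simp
  · simp [h, Function.update_of_ne h]

set_option linter.unusedSectionVars false in
lemma continuous_merge (A : ∀ i, Set (E i)) (i : Fin n) :
    Continuous (fun p : ↥(A i) × COpp A i => mergeC A i p.1 p.2) := by
  apply continuous_pi; intro j
  by_cases h : j = i
  · subst h
    have : (fun p : ↥(A j) × COpp A j => mergeC A j p.1 p.2 j) = fun p => p.1 := by
      funext p; simp [mergeC]
    rw [this]; exact continuous_fst
  · have : (fun p : ↥(A i) × COpp A i => mergeC A i p.1 p.2 j) = fun p => p.2 ⟨j, h⟩ := by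
      funext p; simp [mergeC, h]
    rw [this]; exact (continuous_apply _).comp continuous_snd

lemma continuous_ciSup_aux {X Y : Type*} [PseudoMetricSpace X] [PseudoMetricSpace Y]
    [CompactSpace X] [CompactSpace Y] [Nonempty X] {g : X × Y → ℝ} (hg : Continuous g) :
    Continuous fun y => ⨆ x, g (x, y) := by
  have hbdd : ∀ y : Y, BddAbove (Set.range fun x => g (x, y)) := fun y =>
    (isCompact_range (hg.comp (continuous_id.prodMk continuous_const))).bddAbove
  have hu := CompactSpace.uniformContinuous_of_continuous hg
  rw [Metric.uniformContinuous_iff] at hu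
  rw [Metric.continuous_iff]
  intro y ε hε
  obtain ⟨δ, hδ, hδ'⟩ := hu (ε/2) (by linarith)
  refine ⟨δ, hδ, fun y' hy' => ?_⟩
  have key : ∀ y₁ y₂ : Y, dist y₁ y₂ < δ → (⨆ x, g (x, y₁)) ≤ (⨆ x, g (x, y₂)) + ε/2 := by
    intro y₁ y₂ h12
    apply ciSup_le; intro x
    have hd : dist ((x, y₁) : X × Y) (x, y₂) < δ := by
      rw [Prod.dist_eq, dist_self]; exact max_lt hδ h12
    have h3 := hδ' hd
    rw [Real.dist_eq] at h3
    have h1 : g (x, y₁) ≤ g (x, y₂) + ε/2 := by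
      have := abs_lt.mp h3; linarith [this.2]
    exact h1.trans (add_le_add_left (le_ciSup (hbdd y₂) x) _)
  have h1 := key y' y hy'
  have h2 := key y y' (by rwa [dist_comm])
  rw [Real.dist_eq, abs_lt]; constructor <;> linarith

set_option linter.unusedSectionVars false in
lemma ccgame_add_z (A : ∀ i, Set (E i)) (hconv : ∀ i, Convex ℝ (A i)) {u : CGame A}
    (hu : IsCCGame A hconv u) (i : Fin n) {f : COpp A i → ℝ} (hf : Continuous f) :
    IsCCGame A hconv (u + zC A i f) := by
  constructor
  · intro j
    show Continuous fun a => u j a + zC A i f j a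
    by_cases h : j = i
    · subst h
      simp only [zC, if_pos rfl]
      exact (hu.1 j).add (hf.comp (continuous_pi fun k => continuous_apply _))
    · simp only [zC, if_neg h, add_zero]
      exact hu.1 j
  · intro j a x y s t hs ht hst
    by_cases h : j = i
    · subst h
      have key : ∀ (w : ↥(A j)), zC A j f j (Function.update a j w) = f (fun k => a k.1) := by
        intro w
        have h0 : zC A j f j (Function.update a j w) = f (fun k => Function.update a j w k.1) := by
          simp [zC]
        rw [h0]
        congr 1
        funext k
        exact Function.update_of_ne k.2 _ a
      simp only [Pi.add_apply, key]
      have h2 := hu.2 j a x y s t hs ht hst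
      have h3 : s * f (fun k => a k.1) + t * f (fun k => a k.1) = f (fun k => a k.1) := by
        rw [← add_mul, hst, one_mul]
      nlinarith [h2, h3]
    · simp only [Pi.add_apply, zC, if_neg h, add_zero]
      exact hu.2 j a x y s t hs ht hst


/-- Any pure-strategies solution of continuous convex games satisfying Continuous
Strategic Equivalence (CSE) and the Simultaneous Maximizer axiom (SM) contains
every pure Nash equilibrium. -/
theorem statement15 {n : ℕ} (hn : 0 < n) {E : Fin n → Type*}
    [∀ i, NormedAddCommGroup (E i)] [∀ i, NormedSpace ℝ (E i)]
    (A : ∀ i, Set (E i)) (hA : ∀ i, IsCompact (A i)) (hconv : ∀ i, Convex ℝ (A i))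
    (hne : ∀ i, (A i).Nonempty)
    (S : CGame A → Set (CProfile A))
    (CSE : ∀ u : CGame A, IsCCGame A hconv u →
      ∀ (i : Fin n) (f : COpp A i → ℝ), Continuous f → S u = S (u + zC A i f))
    (SM : ∀ u : CGame A, IsCCGame A hconv u → ∀ a : CProfile A,
      (∀ (i : Fin n) (b : CProfile A), u i a ≥ u i b) → a ∈ S u) :
    ∀ u : CGame A, IsCCGame A hconv u → ∀ a : CProfile A, IsPNEc A u a → a ∈ S u := by
  intro u hu a ha
  haveI : ∀ j, CompactSpace ↥(A j) := fun j => isCompact_iff_compactSpace.mp (hA j)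
  haveI : ∀ j, Nonempty ↥(A j) := fun j => (hne j).to_subtype
  set f : ∀ i, COpp A i → ℝ := fun i b => ⨆ x : ↥(A i), u i (mergeC A i x b) with hfdef
  have bdd : ∀ (i : Fin n) (b : COpp A i),
      BddAbove (Set.range fun x : ↥(A i) => u i (mergeC A i x b)) := by
    intro i b
    have hc : Continuous fun x : ↥(A i) => u i (mergeC A i x b) :=
      (hu.1 i).comp ((continuous_merge A i).comp (continuous_id.prodMk continuous_const))
    exact (isCompact_range hc).bddAbove
  have hfc : ∀ i, Continuous (f i) := by
    intro i
    exact continuous_ciSup_aux ((hu.1 i).comp (continuous_merge A i))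
  have main : ∀ s : Finset (Fin n),
      IsCCGame A hconv (u + ∑ i ∈ s, zC A i (fun b => -(f i b))) ∧
      S u = S (u + ∑ i ∈ s, zC A i (fun b => -(f i b))) := by
    intro s
    induction s using Finset.induction_on with
    | empty => rw [Finset.sum_empty, add_zero]; exact ⟨hu, rfl⟩
    | @insert i s hi ih =>
      rw [Finset.sum_insert hi]
      have rearr : u + (zC A i (fun b => -(f i b)) + ∑ j ∈ s, zC A j (fun b => -(f j b))) =
          (u + ∑ j ∈ s, zC A j (fun b => -(f j b))) + zC A i (fun b => -(f i b)) := by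
        abel
      rw [rearr]
      refine ⟨ccgame_add_z A hconv ih.1 i (hfc i).neg, ?_⟩
      rw [ih.2]
      exact CSE _ ih.1 i _ (hfc i).neg
  obtain ⟨hcc, hS⟩ := main Finset.univ
  rw [hS]
  apply SM _ hcc
  intro i c
  have hv : ∀ x : CProfile A,
      (u + ∑ j : Fin n, zC A j (fun b => -(f j b))) i x = u i x - f i (fun k => x k.1) := by
    intro x
    have h1 : (u + ∑ j : Fin n, zC A j (fun b => -(f j b))) i x =
        u i x + ∑ j : Fin n, zC A j (fun b => -(f j b)) i x := by
      simp [Finset.sum_apply]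
    rw [h1]
    have h2 : ∀ j : Fin n, zC A j (fun b => -(f j b)) i x =
        if i = j then -(f j (fun k => x k.1)) else 0 := by
      intro j; rfl
    simp only [h2]
    rw [Finset.sum_ite_eq]
    simp [sub_eq_add_neg]
  have hfa : f i (fun k => a k.1) = u i a := by
    apply le_antisymm
    · apply ciSup_le
      intro x
      rw [merge_restrict_s15]
      exact ha i x
    · have h4 := le_ciSup (bdd i (fun k => a k.1)) (a i)
      rw [merge_restrict_s15, Function.update_eq_self] at h4
      exact h4
  have hfc2 : u i c ≤ f i (fun k => c k.1) := by
    have h4 := le_ciSup (bdd i (fun k => c k.1)) (c i)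
    rw [merge_restrict_s15, Function.update_eq_self] at h4
    exact h4
  rw [hv a, hv c, hfa]
  have : (0:ℝ) ≥ u i c - f i (fun k => c k.1) := by linarith
  linarith
end
end
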